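/- Let r ≥ 2 be an integer, R > 0, let d be the homogeneous quasi-distance on 𝔽_{r2} with d(p,q) := inf{λ > 0 : ‖δ_{1/λ}(p⁻¹·q)‖ ≤ R}, and let a = 0.9. There exists δ > 0 such that for all p, q ∈ 𝔽_{r2} with v_p, v_q, w_p, w_q nonzero satisfying R·‖w_p‖ ≤ a·‖v_p‖², R·‖w_q‖ ≤ a·‖v_q‖², ∠(v_p,v_q) < δ and ∠(w_p,w_q) < δ, one has d(p,q) ≤ d(0,p) or d(p,q) ≤ d(0,q). -/

import Mathlib

set_option maxHeartbeats 1000000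

namespace Fr2

/-- Index set for the second-layer coordinates: pairs `i < j`. -/
abbrev UT (r : ℕ) := {ij : Fin r × Fin r // ij.1 < ij.2}

/-- Carrier of `𝔽_{r2}`: `p = (v_p, w_p)` with `v_p ∈ ℝ^r` and `w_p ∈ ℝ^{r(r-1)/2}`. -/
abbrev G (r : ℕ) := (Fin r → ℝ) × (UT r → ℝ)

/-- Group law of `𝔽_{r2}`. -/
noncomputable def mul {r : ℕ} (p q : G r) : G r :=
  (fun i => p.1 i + q.1 i,
   fun ij => p.2 ij + q.2 ij +
     (p.1 ij.1.1 * q.1 ij.1.2 - q.1 ij.1.1 * p.1 ij.1.2) / 2)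

/-- Group inverse of `𝔽_{r2}`. -/
noncomputable def inv {r : ℕ} (p : G r) : G r := (fun i => -p.1 i, fun ij => -p.2 ij)

/-- Dilation of factor `l`. -/
noncomputable def dil {r : ℕ} (l : ℝ) (p : G r) : G r := (fun i => l * p.1 i, fun ij => l ^ 2 * p.2 ij)

/-- Square of the Euclidean norm. -/
noncomputable def normSq {r : ℕ} (p : G r) : ℝ := (∑ i, (p.1 i) ^ 2) + ∑ ij, (p.2 ij) ^ 2

/-- The homogeneous quasi-distance whose unit ball centered at the identity is the
Euclidean ball of radius `R`. -/
noncomputable def dist (R : ℝ) {r : ℕ} (p q : G r) : ℝ :=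
  sInf {l : ℝ | 0 < l ∧ normSq (dil (1 / l) (mul (inv p) q)) ≤ R ^ 2}

end Fr2

/-- Euclidean scalar product on `ι → ℝ`. -/
def innerF {ι : Type*} [Fintype ι] (u v : ι → ℝ) : ℝ := ∑ i, u i * v i

/-- Euclidean norm on `ι → ℝ`. -/
noncomputable def normF {ι : Type*} [Fintype ι] (u : ι → ℝ) : ℝ :=
  Real.sqrt (innerF u u)

/-- The (non-oriented) Euclidean angle between two vectors, in `[0, π]`, characterized by
`cos ∠(u,v) = ⟨u,v⟩ / (‖u‖·‖v‖)`. -/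
noncomputable def angleF {ι : Type*} [Fintype ι] (u v : ι → ℝ) : ℝ :=
  Real.arccos (innerF u v / (normF u * normF v))

section basics
variable {ι : Type*} [Fintype ι]

lemma innerF_self_eq (u : ι → ℝ) : innerF u u = ∑ i, u i ^ 2 := by
  simp [innerF, sq]

lemma innerF_self_nonneg (u : ι → ℝ) : 0 ≤ innerF u u := by
  rw [innerF_self_eq]; positivity

lemma normF_nonneg (u : ι → ℝ) : 0 ≤ normF u := Real.sqrt_nonneg _

lemma normF_sq (u : ι → ℝ) : normF u ^ 2 = ∑ i, u i ^ 2 := by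
  rw [normF, Real.sq_sqrt (innerF_self_nonneg u), innerF_self_eq]

lemma normF_pos (u : ι → ℝ) (hu : u ≠ 0) : 0 < normF u := by
  rcases (normF_nonneg u).lt_or_eq with h | h
  · exact h
  · exfalso
    apply hu
    have h2 : ∑ i, u i ^ 2 = 0 := by rw [← normF_sq, ← h]; ring
    funext i
    have := (Finset.sum_eq_zero_iff_of_nonneg (fun i _ => sq_nonneg (u i))).1 h2 i (Finset.mem_univ i)
    exact pow_eq_zero_iff (by norm_num) |>.1 this

lemma innerF_sq_le (u v : ι → ℝ) : (innerF u v)^2 ≤ (normF u)^2 * (normF v)^2 := by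
  rw [normF_sq, normF_sq]
  exact Finset.sum_mul_sq_le_sq_mul_sq _ _ _

lemma abs_innerF_le (u v : ι → ℝ) : |innerF u v| ≤ normF u * normF v := by
  have h := innerF_sq_le u v
  have h2 : (normF u * normF v)^2 = (normF u)^2 * (normF v)^2 := by ring
  rw [← h2] at h
  calc |innerF u v| = Real.sqrt ((innerF u v)^2) := (Real.sqrt_sq_eq_abs _).symm
  _ ≤ Real.sqrt ((normF u * normF v)^2) := Real.sqrt_le_sqrt h
  _ = normF u * normF v := Real.sqrt_sq (mul_nonneg (normF_nonneg u) (normF_nonneg v))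

lemma innerF_eq_cos (u v : ι → ℝ) (hu : u ≠ 0) (hv : v ≠ 0) :
    innerF u v = normF u * normF v * Real.cos (angleF u v) := by
  have hu' := normF_pos u hu
  have hv' := normF_pos v hv
  have hprod : 0 < normF u * normF v := mul_pos hu' hv'
  have habs := abs_innerF_le u v
  have hcos : Real.cos (angleF u v) = innerF u v / (normF u * normF v) := by
    rw [angleF]
    refine Real.cos_arccos ?_ ?_
    · rw [le_div_iff₀ hprod, neg_mul]; linarith [abs_le.1 habs]
    · rw [div_le_one hprod]; linarith [abs_le.1 habs]
  rw [hcos]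
  field_simp

lemma cos_angleF_ge (u v : ι → ℝ) (δ : ℝ) (hδ : 0 ≤ δ) (h : angleF u v < δ) :
    1 - δ^2/2 ≤ Real.cos (angleF u v) := by
  have h0 : 0 ≤ angleF u v := Real.arccos_nonneg _
  have := Real.one_sub_sq_div_two_le_cos (x := angleF u v)
  nlinarith

lemma expand1 (u v : ι → ℝ) :
    ∑ i, (u i - v i)^2 = (∑ i, (u i)^2) + (∑ i, (v i)^2) - 2*(innerF v u) := by
  have h : ∀ i ∈ Finset.univ, (u i - v i)^2 = ((u i)^2 + (v i)^2) - 2*(v i * u i) :=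
    fun i _ => by ring
  rw [innerF, Finset.sum_congr rfl h, Finset.sum_sub_distrib, Finset.sum_add_distrib,
    ← Finset.mul_sum]

lemma expand2 (u v A : ι → ℝ) :
    ∑ i, (u i - v i - A i)^2
      = ((∑ i, (u i)^2) + (∑ i, (v i)^2) - 2*(innerF v u))
        + 2*((innerF v A) - (innerF u A)) + ∑ i, (A i)^2 := by
  have h : ∀ i ∈ Finset.univ, (u i - v i - A i)^2
      = (((u i)^2 + (v i)^2) - 2*(v i * u i)) + 2*((v i * A i) - (u i * A i)) + (A i)^2 :=
    fun i _ => by ring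
  rw [innerF, innerF, innerF, Finset.sum_congr rfl h]
  simp only [Finset.sum_add_distrib, Finset.sum_sub_distrib, ← Finset.mul_sum]

lemma lagrange (u v : ι → ℝ) :
    ∑ i, ∑ j, (u i * v j - v i * u j)^2
      = 2*((∑ i, (u i)^2)*(∑ i, (v i)^2)) - 2*(innerF u v)^2 := by
  have h : ∀ i ∈ Finset.univ, ∑ j, (u i * v j - v i * u j)^2
      = ((u i)^2 * (∑ j, (v j)^2) + (v i)^2 * (∑ j, (u j)^2))
        - 2*((u i * v i) * (∑ j, u j * v j)) := by
    intro i _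
    have h2 : ∀ j ∈ Finset.univ, (u i * v j - v i * u j)^2
        = ((u i)^2 * (v j)^2 + (v i)^2 * (u j)^2) - 2*((u i * v i) * (u j * v j)) :=
      fun j _ => by ring
    rw [Finset.sum_congr rfl h2]
    simp only [Finset.sum_add_distrib, Finset.sum_sub_distrib, ← Finset.mul_sum]
  rw [innerF, Finset.sum_congr rfl h]
  simp only [Finset.sum_add_distrib, Finset.sum_sub_distrib, ← Finset.sum_mul, ← Finset.mul_sum]
  ring

end basics

lemma sum_UT_le {r : ℕ} (f : Fin r × Fin r → ℝ) (hf : ∀ x, 0 ≤ f x) :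
    ∑ x : Fr2.UT r, f x.1 ≤ ∑ x : Fin r × Fin r, f x := by
  rw [← Finset.sum_subtype (Finset.univ.filter fun ij : Fin r × Fin r => ij.1 < ij.2)
    (by simp) f]
  exact Finset.sum_le_sum_of_subset_of_nonneg (Finset.filter_subset _ _) (fun i _ _ => hf i)

section distlem
open Fr2
variable {r : ℕ}

/-- the value of dist from the origin -/
noncomputable def lam (R : ℝ) (V W : ℝ) : ℝ :=
  Real.sqrt ((V^2 + Real.sqrt (V^4+4*R^2*W^2))/(2*R^2))

lemma quartic_iff (R V W l : ℝ) (hR : 0 < R) (hV : 0 < V) (hW : 0 ≤ W) (hl : 0 < l) :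
    V^2*l^2 + W^2 ≤ R^2*l^4 ↔ lam R V W ≤ l := by
  rw [lam]
  set s := Real.sqrt (V^4+4*R^2*W^2) with hs
  have hsnn : 0 ≤ s := Real.sqrt_nonneg _
  have hssq : s^2 = V^4+4*R^2*W^2 := Real.sq_sqrt (by positivity)
  rw [Real.sqrt_le_left hl.le]
  constructor
  · intro h
    have hV2 : V^2 ≤ R^2*l^2 := by nlinarith [sq_nonneg W, mul_pos hl hl]
    have hs2 : s ≤ 2*R^2*l^2 - V^2 := by
      have h1 : s^2 ≤ (2*R^2*l^2 - V^2)^2 := by nlinarith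
      nlinarith
    rw [div_le_iff₀ (by positivity)]
    nlinarith
  · intro h
    rw [div_le_iff₀ (by positivity)] at h
    have hT : s ≤ 2*R^2*l^2 - V^2 := by linarith
    have hs2 : s^2 ≤ (2*R^2*l^2 - V^2)^2 := by nlinarith
    nlinarith [mul_pos hR hR]

lemma lam_pos (R V W : ℝ) (hR : 0 < R) (hV : 0 < V) : 0 < lam R V W := by
  apply Real.sqrt_pos.2
  have : 0 ≤ Real.sqrt (V^4+4*R^2*W^2) := Real.sqrt_nonneg _
  positivity

lemma lam_eq (R V W : ℝ) (hR : 0 < R) (hV : 0 < V) :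
    R^2*(lam R V W)^4 = V^2*(lam R V W)^2 + W^2 := by
  have hsnn : 0 ≤ Real.sqrt (V^4+4*R^2*W^2) := Real.sqrt_nonneg _
  have hssq : (Real.sqrt (V^4+4*R^2*W^2))^2 = V^4+4*R^2*W^2 := Real.sq_sqrt (by positivity)
  have hM : 0 ≤ (V^2 + Real.sqrt (V^4+4*R^2*W^2))/(2*R^2) := by positivity
  have h2 : (lam R V W)^2 = (V^2 + Real.sqrt (V^4+4*R^2*W^2))/(2*R^2) := Real.sq_sqrt hM
  have h4 : (lam R V W)^4 = ((V^2 + Real.sqrt (V^4+4*R^2*W^2))/(2*R^2))^2 := by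
    rw [← h2]; ring
  rw [h2, h4]
  field_simp
  have hs' : (Real.sqrt (V ^ 4 + R ^ 2 * 4 * W ^ 2)) ^ 2 = V ^ 4 + R ^ 2 * 4 * W ^ 2 :=
    Real.sq_sqrt (by positivity)
  nlinarith [hs']

lemma normSq_dil (m : ℝ) (x : G r) :
    normSq (dil m x) = m^2 * (∑ i, (x.1 i)^2) + m^4 * ∑ ij, (x.2 ij)^2 := by
  simp only [normSq, dil, Finset.mul_sum]
  congr 1 <;> apply Finset.sum_congr rfl <;> intros <;> ring

lemma mul_inv_zero (p : G r) : mul (inv (0 : G r)) p = p := by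
  have h1 : (0 : G r).1 = 0 := rfl
  apply Prod.ext
  · funext i; simp [mul, inv, h1]
  · funext ij; simp [mul, inv, h1]

lemma dist_le (R : ℝ) (p q : G r) (l : ℝ) (hl : 0 < l)
    (h : normSq (dil (1/l) (mul (inv p) q)) ≤ R^2) : Fr2.dist R p q ≤ l :=
  csInf_le ⟨0, fun x hx => hx.1.le⟩ ⟨hl, h⟩

lemma normSq_cond_iff (R l : ℝ) (hl : 0 < l) (x : G r) :
    normSq (dil (1/l) x) ≤ R^2 ↔
      (∑ i, (x.1 i)^2)*l^2 + (∑ ij, (x.2 ij)^2) ≤ R^2*l^4 := by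
  rw [normSq_dil]
  have h4 : (0:ℝ) < l^4 := by positivity
  have heq : (1/l)^2 * (∑ i, (x.1 i)^2) + (1/l)^4 * (∑ ij, (x.2 ij)^2)
      = ((∑ i, (x.1 i)^2)*l^2 + (∑ ij, (x.2 ij)^2))/l^4 := by
    field_simp
  rw [heq, div_le_iff₀ h4]

lemma dist_zero' (R : ℝ) (hR : 0 < R) (p : G r) (hp1 : p.1 ≠ 0) :
    Fr2.dist R 0 p = lam R (normF p.1) (normF p.2) := by
  have hV' : normF p.1 = Real.sqrt (∑ i, (p.1 i)^2) := by rw [normF, innerF_self_eq]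
  have hW' : normF p.2 = Real.sqrt (∑ ij, (p.2 ij)^2) := by rw [normF, innerF_self_eq]
  set V := normF p.1 with hV
  set W := normF p.2 with hW
  have hVp : 0 < V := normF_pos p.1 hp1
  have hWnn : 0 ≤ W := normF_nonneg p.2
  have hV2 : V^2 = ∑ i, (p.1 i)^2 := by rw [hV, normF_sq]
  have hW2 : W^2 = ∑ ij, (p.2 ij)^2 := by rw [hW, normF_sq]
  have hlam := lam_pos R V W hR hVp
  have hset : {l : ℝ | 0 < l ∧ normSq (dil (1/l) (mul (inv 0) p)) ≤ R^2} = Set.Ici (lam R V W) := by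
    ext l
    simp only [Set.mem_setOf_eq, Set.mem_Ici, mul_inv_zero]
    constructor
    · rintro ⟨hl, h⟩
      rw [normSq_cond_iff R l hl p, ← hV2, ← hW2] at h
      exact (quartic_iff R V W l hR hVp hWnn hl).1 h
    · intro h
      have hl : 0 < l := lt_of_lt_of_le hlam h
      refine ⟨hl, ?_⟩
      rw [normSq_cond_iff R l hl p, ← hV2, ← hW2]
      exact (quartic_iff R V W l hR hVp hWnn hl).2 h
  rw [Fr2.dist, hset, csInf_Ici]

end distlem

lemma sqle {x y : ℝ} (hy : 0 ≤ y) (h : x^2 ≤ y^2) (hx : 0 ≤ x) : x ≤ y := by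
  nlinarith

lemma LaRl (R a b l : ℝ) (hR : 0 < R) (ha : 0 < a) (hl : 0 < l)
    (h : a^2*l^2 + b^2 ≤ R^2*l^4) : a ≤ R*l := by
  apply sqle (by positivity) _ ha.le
  nlinarith [sq_nonneg b, mul_pos hl hl]

lemma L65 (R a b l : ℝ) (hR : 0 < R) (ha : 0 < a) (hb : 0 < b) (hl : 0 < l)
    (heq : R^2*l^4 = a^2*l^2 + b^2) (hpb : R*b ≤ 0.9*a^2) : 0.65*(R^2*l^2) ≤ a^2 := by
  have hRb2 : R^2*b^2 ≤ 0.81*a^4 := by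
    nlinarith [mul_le_mul hpb hpb (by positivity) (by positivity)]
  nlinarith [mul_pos (mul_pos hR hR) (mul_pos hl hl), mul_pos ha ha,
    mul_pos (mul_pos hR hl) ha, sq_nonneg (a^2 - 0.654*(R^2*l^2))]

lemma L8 (x y : ℝ) (hx : 0 < x) (hy : 0 < y) (h : 0.65*y^2 ≤ x^2) : 0.8*y ≤ x := by
  nlinarith

lemma Lcos2 (cv δ : ℝ) (hcv : 1 - δ^2/2 ≤ cv) (hcv1 : cv ≤ 1) : 1 - cv^2 ≤ δ^2 := by
  nlinarith [sq_nonneg (1-cv)]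

lemma core (R a b c e l cv cw NA K δ : ℝ)
    (hR : 0 < R) (ha : 0 < a) (hb : 0 < b) (hc : 0 < c) (he : 0 < e) (hl : 0 < l)
    (hδ0 : 0 ≤ δ) (hδ1 : δ ≤ 1/100) (hδ2 : R*δ ≤ 1/100)
    (heq : R^2*l^4 = a^2*l^2 + b^2)
    (hq : c^2*l^2 + e^2 ≤ R^2*l^4)
    (hpb : R*b ≤ 0.9*a^2) (hqb : R*e ≤ 0.9*c^2)
    (hcv : 1 - δ^2/2 ≤ cv) (hcv1 : cv ≤ 1)
    (hcw : 1 - δ^2/2 ≤ cw) (hcw1 : cw ≤ 1)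
    (hNA : 0 ≤ NA) (hNA2 : NA^2 ≤ a^2*c^2*(1-cv^2)/2)
    (hKb : |K| ≤ (b+e)*NA) :
    (a^2 + c^2 - 2*(a*c*cv))*l^2 + ((b^2 + e^2 - 2*(b*e*cw)) + 2*K + NA^2)
      ≤ R^2*l^4 := by
  have hδsq : δ^2 ≤ 0.0001 := by
    have := mul_le_mul hδ1 hδ1 hδ0 (by norm_num : (0:ℝ) ≤ 1/100)
    linarith only [this]
  have hK : (0:ℝ) < c*R*l^3 := by positivity
  have haRl : a ≤ R*l := LaRl R a b l hR ha hl heq.ge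
  have hcRl : c ≤ R*l := LaRl R c e l hR hc hl hq
  have ha2 : a^2 ≤ R^2*l^2 := by
    have := mul_le_mul haRl haRl ha.le (by positivity : (0:ℝ) ≤ R*l)
    linarith only [this]
  have hc2 : c^2 ≤ R^2*l^2 := by
    have := mul_le_mul hcRl hcRl hc.le (by positivity : (0:ℝ) ≤ R*l)
    linarith only [this]
  have hbB : b ≤ 0.9*R*l^2 := by
    have h1 : R*b ≤ R*(0.9*R*l^2) := by linarith only [hpb, ha2]
    exact le_of_mul_le_mul_left h1 hR
  have heB : e ≤ 0.9*c*l := by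
    have h0 : c*c ≤ c*(R*l) := mul_le_mul_of_nonneg_left hcRl hc.le
    have h1 : R*e ≤ R*(0.9*c*l) := by linarith only [hqb, h0]
    exact le_of_mul_le_mul_left h1 hR
  have ha65 : 0.65*(R^2*l^2) ≤ a^2 := L65 R a b l hR ha hb hl heq hpb
  have ha8 : 0.8*(R*l) ≤ a := L8 a (R*l) ha (mul_pos hR hl) (by linarith only [ha65])
  -- margin claim
  have hmarg : c^2*l^2 + e^2 ≤ 2*a*c*l^2 - 0.16*(c*R*l^3) := by
    have hacl : 0.8*(R*l)*(c*l^2) ≤ a*(c*l^2) :=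
      mul_le_mul_of_nonneg_right ha8 (by positivity)
    rcases le_total c (0.8*(R*l)) with hc8 | hc8
    · have he72 : e ≤ 0.72*c*l := by
        have h0 : c*c ≤ c*(0.8*(R*l)) := mul_le_mul_of_nonneg_left hc8 hc.le
        have h1 : R*e ≤ R*(0.72*c*l) := by linarith only [hqb, h0]
        exact le_of_mul_le_mul_left h1 hR
      have h2 : e*e ≤ (0.72*c*l)*(0.72*c*l) :=
        mul_le_mul he72 he72 he.le (by positivity)
      have h3 : c*(c*l^2) ≤ (0.8*(R*l))*(c*l^2) :=
        mul_le_mul_of_nonneg_right hc8 (by positivity)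
      linarith only [h2, h3, hacl, hK]
    · have h3 : (R*l)*(R*l^3) ≤ (1.25*c)*(R*l^3) :=
        mul_le_mul_of_nonneg_right (by linarith) (by positivity)
      linarith only [h3, hacl, hq, hK]
  -- NA bounds
  have hNAle : NA ≤ a*c*δ := by
    apply sqle (by positivity) _ hNA
    have h1 : 1 - cv^2 ≤ δ^2 := Lcos2 cv δ hcv hcv1
    have h2 : a^2*c^2/2*(1-cv^2) ≤ a^2*c^2/2*δ^2 :=
      mul_le_mul_of_nonneg_left h1 (by positivity)
    nlinarith [hNA2, h2, sq_nonneg (a*c*δ)]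
  have hNAle2 : NA ≤ (R*l)*c*δ := by
    have h1 : a*(c*δ) ≤ (R*l)*(c*δ) :=
      mul_le_mul_of_nonneg_right haRl (by positivity)
    linarith only [hNAle, h1]
  have hcd : c*δ ≤ l*(1/100) := by
    have h1 : c*δ ≤ (R*l)*δ := mul_le_mul_of_nonneg_right hcRl hδ0
    have h2 : l*(R*δ) ≤ l*(1/100) := mul_le_mul_of_nonneg_left hδ2 hl.le
    linarith only [h1, h2]
  have t1 : a*c*l^2 - 0.0001*(c*R*l^3)/2 ≤ a*c*cv*l^2 := by
    have h1 : a*c*l^2*(1-cv) ≤ a*c*l^2*(δ^2/2) :=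
      mul_le_mul_of_nonneg_left (by linarith) (by positivity)
    have h2 : a*(c*l^2*(δ^2/2)) ≤ (R*l)*(c*l^2*(0.0001/2)) :=
      mul_le_mul haRl
        (mul_le_mul_of_nonneg_left (by linarith) (by positivity : (0:ℝ) ≤ c*l^2))
        (by positivity) (by positivity)
    linarith only [h1, h2]
  have t2 : b*e - 0.0001*(c*R*l^3) ≤ b*e*cw := by
    have h1 : b*e*(1-cw) ≤ b*e*(δ^2/2) :=
      mul_le_mul_of_nonneg_left (by linarith) (by positivity)
    have h2 : b*(e*(δ^2/2)) ≤ (0.9*R*l^2)*((0.9*c*l)*(0.0001/2)) :=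
      mul_le_mul hbB
        (mul_le_mul heB (by linarith) (by positivity) (by positivity))
        (by positivity) (by positivity)
    linarith only [h1, h2, hK]
  have t3 : e*NA ≤ 0.009*(c*R*l^3) := by
    have h1 : e*NA ≤ (0.9*c*l)*((R*l)*c*δ) :=
      mul_le_mul heB hNAle2 hNA (by positivity)
    have h2 : (0.9*(c*R*l^2))*(c*δ) ≤ (0.9*(c*R*l^2))*(l*(1/100)) :=
      mul_le_mul_of_nonneg_left hcd (by positivity)
    linarith only [h1, h2]
  have t4 : b*NA ≤ 0.009*(c*R*l^3) := by
    have h1 : b*NA ≤ (0.9*R*l^2)*((R*l)*c*δ) :=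
      mul_le_mul hbB hNAle2 hNA (by positivity)
    have h2 : (0.9*(c*R*l^2))*((R*l)*δ) ≤ (0.9*(c*R*l^2))*(l*(1/100)) := by
      have h3 : l*(R*δ) ≤ l*(1/100) := mul_le_mul_of_nonneg_left hδ2 hl.le
      have h5 : (R*l)*δ ≤ l*(1/100) := by linarith only [h3]
      exact mul_le_mul_of_nonneg_left h5 (by positivity)
    linarith only [h1, h2]
  have t5 : NA^2 ≤ 0.0001*(c*R*l^3) := by
    have h1 : NA*NA ≤ ((R*l)*c*δ)*((R*l)*c*δ) :=
      mul_le_mul hNAle2 hNAle2 hNA (by positivity)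
    have h3 : (R*δ)*(c*δ) ≤ (1/100)*(l*(1/100)) :=
      mul_le_mul hδ2 hcd (by positivity) (by norm_num)
    have h4 : ((c*R*l^2))*((R*δ)*(c*δ)) ≤ ((c*R*l^2))*((1/100)*(l*(1/100))) :=
      mul_le_mul_of_nonneg_left h3 (by positivity)
    linarith only [h1, h4]
  have hbe : 0 < b*e := mul_pos hb he
  have hK2 : K ≤ b*NA + e*NA := by
    have := le_trans (le_abs_self K) hKb; linarith only [this]
  linarith only [heq, hmarg, t1, t2, t3, t4, t5, hK2, hbe, hK]

/-- Lemma for points outside the parabolic region `𝓟_a`, `a = 0.9`: if the angles are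
small then one of the two points lies in the ball centered at the other with radius the
distance of that other point to the identity. -/
theorem statement14 (r : ℕ) (hr : 2 ≤ r) (R : ℝ) (hR : 0 < R) :
    ∃ δ : ℝ, 0 < δ ∧ ∀ p q : Fr2.G r,
      p.1 ≠ 0 → q.1 ≠ 0 → p.2 ≠ 0 → q.2 ≠ 0 →
      (R * normF p.2 ≤ (0.9 : ℝ) * (normF p.1) ^ 2) →
      (R * normF q.2 ≤ (0.9 : ℝ) * (normF q.1) ^ 2) →
      angleF p.1 q.1 < δ → angleF p.2 q.2 < δ →
      Fr2.dist R p q ≤ Fr2.dist R 0 p ∨ Fr2.dist R p q ≤ Fr2.dist R 0 q := by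
  refine ⟨min (1/100) (1/(100*R)), lt_min (by norm_num) (by positivity), ?_⟩
  intro p q hp1 hq1 hp2 hq2 hpb hqb hav haw
  set δ : ℝ := min (1/100) (1/(100*R)) with hδdef
  have hδ0 : (0:ℝ) ≤ δ := le_min (by norm_num) (by positivity)
  have hδ1 : δ ≤ 1/100 := min_le_left _ _
  have hδ2 : R*δ ≤ 1/100 := by
    have h := min_le_right (1/100) (1/(100*R))
    have h2 : R*δ ≤ R*(1/(100*R)) := mul_le_mul_of_nonneg_left h hR.le
    have h3 : R*(1/(100*R)) = 1/100 := by field_simp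
    linarith only [h2, h3]
  set a := normF p.1 with hadef
  set b := normF p.2 with hbdef
  set c := normF q.1 with hcdef
  set e := normF q.2 with hedef
  have ha : 0 < a := normF_pos p.1 hp1
  have hb : 0 < b := normF_pos p.2 hp2
  have hc : 0 < c := normF_pos q.1 hq1
  have he : 0 < e := normF_pos q.2 hq2
  set cv := Real.cos (angleF p.1 q.1) with hcvdef
  set cw := Real.cos (angleF p.2 q.2) with hcwdef
  have hIv : innerF p.1 q.1 = a*c*cv := innerF_eq_cos p.1 q.1 hp1 hq1
  have hIw : innerF p.2 q.2 = b*e*cw := innerF_eq_cos p.2 q.2 hp2 hq2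
  have hcv : 1 - δ^2/2 ≤ cv := cos_angleF_ge p.1 q.1 δ hδ0 hav
  have hcw : 1 - δ^2/2 ≤ cw := cos_angleF_ge p.2 q.2 δ hδ0 haw
  have hcv1 : cv ≤ 1 := Real.cos_le_one _
  have hcw1 : cw ≤ 1 := Real.cos_le_one _
  -- the A term
  set A : Fr2.UT r → ℝ := fun ij => (p.1 ij.1.1 * q.1 ij.1.2 - q.1 ij.1.1 * p.1 ij.1.2)/2
    with hAdef
  set NA := normF A with hNAdef
  have hNA : 0 ≤ NA := normF_nonneg A
  have hNA2 : NA^2 ≤ a^2*c^2*(1-cv^2)/2 := by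
    have h1 : NA^2 = ∑ ij : Fr2.UT r, (A ij)^2 := normF_sq A
    have h2 : ∑ ij : Fr2.UT r, (A ij)^2
        ≤ ∑ y : Fin r × Fin r, ((p.1 y.1 * q.1 y.2 - q.1 y.1 * p.1 y.2)/2)^2 :=
      sum_UT_le (fun y => ((p.1 y.1 * q.1 y.2 - q.1 y.1 * p.1 y.2)/2)^2)
        (fun x => by positivity)
    have h3 : ∑ y : Fin r × Fin r, ((p.1 y.1 * q.1 y.2 - q.1 y.1 * p.1 y.2)/2)^2
        = (1/4) * ∑ i, ∑ j, (p.1 i * q.1 j - q.1 i * p.1 j)^2 := by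
      rw [Fintype.sum_prod_type, Finset.mul_sum]
      refine Finset.sum_congr rfl (fun i _ => ?_)
      rw [Finset.mul_sum]
      exact Finset.sum_congr rfl (fun j _ => by ring)
    have h4 : (∑ i, (p.1 i)^2) = a^2 := (normF_sq p.1).symm
    have h5 : (∑ i, (q.1 i)^2) = c^2 := (normF_sq q.1).symm
    have h6 := lagrange p.1 q.1
    rw [h4, h5, hIv] at h6
    rw [h1]
    calc ∑ ij : Fr2.UT r, (A ij)^2 ≤ _ := h2
    _ = (1/4) * ∑ i, ∑ j, (p.1 i * q.1 j - q.1 i * p.1 j)^2 := h3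
    _ = (1/4) * (2*(a^2*c^2) - 2*(a*c*cv)^2) := by rw [h6]
    _ = a^2*c^2*(1-cv^2)/2 := by ring
  set K := innerF p.2 A - innerF q.2 A with hKdef
  have hKb : |K| ≤ (b+e)*NA := by
    have h1 : |innerF p.2 A| ≤ b*NA := abs_innerF_le p.2 A
    have h2 : |innerF q.2 A| ≤ e*NA := abs_innerF_le q.2 A
    calc |K| = |innerF p.2 A + -(innerF q.2 A)| := by rw [hKdef]; ring_nf
    _ ≤ |innerF p.2 A| + |-(innerF q.2 A)| := abs_add_le _ _
    _ = |innerF p.2 A| + |innerF q.2 A| := by rw [abs_neg]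
    _ ≤ (b+e)*NA := by linarith only [h1, h2]
  -- coordinate computations for p⁻¹ q
  set x := Fr2.mul (Fr2.inv p) q with hxdef
  have hx1 : ∀ i, x.1 i = q.1 i - p.1 i := by
    intro i; rw [hxdef]; simp [Fr2.mul, Fr2.inv]; ring
  have hx2 : ∀ ij : Fr2.UT r, x.2 ij = q.2 ij - p.2 ij - A ij := by
    intro ij; rw [hxdef, hAdef]; simp [Fr2.mul, Fr2.inv]; ring
  have e1 : ∑ i, (x.1 i)^2 = a^2 + c^2 - 2*(a*c*cv) := by
    rw [Finset.sum_congr rfl (fun i _ => by rw [hx1 i])]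
    rw [expand1 q.1 p.1, hIv,
      show (∑ i, (q.1 i)^2) = c^2 from (normF_sq q.1).symm,
      show (∑ i, (p.1 i)^2) = a^2 from (normF_sq p.1).symm]
    ring
  have e2 : ∑ ij, (x.2 ij)^2 = (b^2 + e^2 - 2*(b*e*cw)) + 2*K + NA^2 := by
    rw [Finset.sum_congr rfl (fun ij _ => by rw [hx2 ij])]
    rw [expand2 q.2 p.2 A]
    rw [show innerF p.2 q.2 = b*e*cw from hIw,
      show (∑ ij, (q.2 ij)^2) = e^2 from (normF_sq q.2).symm,
      show (∑ ij, (p.2 ij)^2) = b^2 from (normF_sq p.2).symm,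
      show (∑ ij, (A ij)^2) = NA^2 from (normF_sq A).symm]
    rw [hKdef]; ring
  rcases le_total (lam R c e) (lam R a b) with hle | hle
  · left
    rw [dist_zero' R hR p hp1]
    set l := lam R a b with hldef
    have hl : 0 < l := lam_pos R a b hR ha
    apply dist_le R p q l hl
    rw [normSq_cond_iff R l hl x, e1, e2]
    have heq : R^2*l^4 = a^2*l^2 + b^2 := lam_eq R a b hR ha
    have hq' : c^2*l^2 + e^2 ≤ R^2*l^4 :=
      (quartic_iff R c e l hR hc he.le hl).2 (le_trans hle le_rfl)
    exact core R a b c e l cv cw NA K δ hR ha hb hc he hl hδ0 hδ1 hδ2 heq hq'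
      hpb hqb hcv hcv1 hcw hcw1 hNA hNA2 hKb
  · right
    rw [dist_zero' R hR q hq1]
    set l := lam R c e with hldef
    have hl : 0 < l := lam_pos R c e hR hc
    apply dist_le R p q l hl
    rw [normSq_cond_iff R l hl x, e1, e2]
    have heq : R^2*l^4 = c^2*l^2 + e^2 := lam_eq R c e hR hc
    have hq' : a^2*l^2 + b^2 ≤ R^2*l^4 :=
      (quartic_iff R a b l hR ha hb.le hl).2 hle
    have hcore := core R c e a b l cv cw NA K δ hR hc he ha hb hl hδ0 hδ1 hδ2 heq hq'
      hqb hpb hcv hcv1 hcw hcw1 hNA (by linarith only [hNA2]) (by linarith only [hKb])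
    linarith only [hcore]
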